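/- For any finite set F of n points in the unit square [0,1]^2, the shortest Hamiltonian path through F has length at most c·√n for a universal constant c (one may take c = 2√2 or any valid constant). -/

import Mathlib

open Metric Set MeasureTheory Filter
open scoped Classical ENNReal BigOperators

noncomputable section

/-- Length of the polygonal path visiting the points of the list in order,
for a (pseudo-)distance function `D`. -/
def pathLen {E : Type*} (D : E → E → ℝ) : List E → ℝ
  | [] => 0
  | [_] => 0
  | a :: b :: l => D a b + pathLen D (b :: l)

/-- Length of a shortest Hamiltonian path through a finite set of points,
for the (pseudo-)distance `D`. -/
def tspWith {E : Type*} (D : E → E → ℝ) (F : Finset E) : ℝ :=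
  sInf {L : ℝ | ∃ l : List E, l.Nodup ∧ l.toFinset = F ∧ pathLen D l = L}

/-- The points of `F` lying in the region `R`. -/
def restr {E : Type*} (F : Finset E) (R : Set E) : Finset E :=
  F.filter (fun x => x ∈ R)

/-- Euclidean TSP length `T(F, R)`: shortest Hamiltonian path through `F ∩ R`. -/
def tsp {E : Type*} [PseudoMetricSpace E] (F : Finset E) (R : Set E) : ℝ :=
  tspWith dist (restr F R)

/-- The boundary pseudo-metric of a region `R`: the Euclidean metric, quotiented so
that travel along the boundary `∂R` is free. -/
def bMetric {E : Type*} [PseudoMetricSpace E] (R : Set E) (a b : E) : ℝ :=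
  min (dist a b) (Metric.infDist a (frontier R) + Metric.infDist b (frontier R))

/-- Boundary TSP length `T_B(F, R)`: shortest Hamiltonian tour on `F ∩ R` for the
boundary pseudo-metric of `R`. -/
def btsp {E : Type*} [PseudoMetricSpace E] (F : Finset E) (R : Set E) : ℝ :=
  tspWith (bMetric R) (restr F R)

/-- The unit hypercube `[0,1]^d`. -/
def unitCube (d : ℕ) : Set (EuclideanSpace ℝ (Fin d)) :=
  {x | ∀ i, x i ∈ Set.Icc (0 : ℝ) 1}

/-- The closed subcube of edge length `1/m` indexed by `k` in the partition of `[0,1]^d`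
into `m^d` congruent subcubes. -/
def subcube (d m : ℕ) (k : Fin d → Fin m) : Set (EuclideanSpace ℝ (Fin d)) :=
  {x | ∀ i, x i ∈ Set.Icc ((k i : ℝ) / m) (((k i : ℝ) + 1) / m)}

/-- The half-open subcube of edge length `1/m` indexed by `k`. -/
def subcubeIco (d m : ℕ) (k : Fin d → Fin m) : Set (EuclideanSpace ℝ (Fin d)) :=
  {x | ∀ i, x i ∈ Set.Ico ((k i : ℝ) / m) (((k i : ℝ) + 1) / m)}

namespace TSPaux

abbrev E2 := EuclideanSpace ℝ (Fin 2)

/-- horizontal strip index -/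
def strip (m : ℕ) (p : E2) : ℕ := min (⌊p 1 * m⌋.toNat) (m - 1)

/-- snake order: by strip, then by x-coordinate -/
def sle (m : ℕ) (a b : E2) : Prop :=
  strip m a < strip m b ∨ (strip m a = strip m b ∧ a 0 ≤ b 0)

lemma sle_total (m : ℕ) (a b : E2) : sle m a b ∨ sle m b a := by
  unfold sle
  rcases lt_trichotomy (strip m a) (strip m b) with h | h | h
  · exact Or.inl (Or.inl h)
  · rcases le_total (a 0) (b 0) with h' | h'
    · exact Or.inl (Or.inr ⟨h, h'⟩)
    · exact Or.inr (Or.inr ⟨h.symm, h'⟩)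
  · exact Or.inr (Or.inl h)

lemma sle_trans (m : ℕ) (a b c : E2) (h1 : sle m a b) (h2 : sle m b c) : sle m a c := by
  unfold sle at *
  rcases h1 with h1 | ⟨h1, h1'⟩ <;> rcases h2 with h2 | ⟨h2, h2'⟩
  · exact Or.inl (h1.trans h2)
  · exact Or.inl (h2 ▸ h1)
  · exact Or.inl (h1 ▸ h2)
  · exact Or.inr ⟨h1.trans h2, h1'.trans h2'⟩

lemma strip_le (m : ℕ) (p : E2) : strip m p ≤ m - 1 := min_le_right _ _

lemma strip_lb (m : ℕ) (hm : 1 ≤ m) {p : E2} (hp : p ∈ unitCube 2) :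
    (strip m p : ℝ) / m ≤ p 1 := by
  have hm0 : (0:ℝ) < m := by exact_mod_cast hm
  rw [div_le_iff₀ hm0]
  have h0 : (0:ℝ) ≤ p 1 * m := mul_nonneg (hp 1).1 hm0.le
  have h1 : ((⌊p 1 * m⌋.toNat : ℕ) : ℝ) ≤ p 1 * m := by
    rw [show ((⌊p 1 * m⌋.toNat : ℕ) : ℝ) = ((⌊p 1 * m⌋.toNat : ℤ) : ℝ) by push_cast; ring,
      Int.toNat_of_nonneg (Int.floor_nonneg.mpr h0)]
    exact Int.floor_le _
  calc ((strip m p : ℕ) : ℝ) ≤ ((⌊p 1 * m⌋.toNat : ℕ) : ℝ) := by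
        exact_mod_cast min_le_left _ _
    _ ≤ p 1 * m := h1

lemma strip_ub (m : ℕ) (hm : 1 ≤ m) {p : E2} (hp : p ∈ unitCube 2) :
    p 1 ≤ ((strip m p : ℝ) + 1) / m := by
  have hm0 : (0:ℝ) < m := by exact_mod_cast hm
  rw [le_div_iff₀ hm0]
  rcases le_or_gt (⌊p 1 * m⌋.toNat) (m - 1) with h | h
  · have hs : strip m p = ⌊p 1 * m⌋.toNat := min_eq_left h
    have h0 : (0:ℝ) ≤ p 1 * m := mul_nonneg (hp 1).1 hm0.le
    have := Int.lt_floor_add_one (p 1 * m)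
    rw [hs]
    have : p 1 * m < ((⌊p 1 * m⌋.toNat : ℤ) : ℝ) + 1 := by
      rwa [Int.toNat_of_nonneg (Int.floor_nonneg.mpr h0)]
    push_cast at this ⊢
    linarith [this]
  · have hs : strip m p = m - 1 := min_eq_right h.le
    rw [hs]
    have : ((m - 1 : ℕ) : ℝ) + 1 = m := by
      have : m - 1 + 1 = m := Nat.sub_add_cancel hm
      exact_mod_cast this
    rw [this]
    calc p 1 * m ≤ 1 * m := by
          apply mul_le_mul_of_nonneg_right (hp 1).2 hm0.le
      _ = m := one_mul _

lemma dist_le_l1 (a b : E2) : dist a b ≤ |a 0 - b 0| + |a 1 - b 1| := by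
  rw [EuclideanSpace.dist_eq]
  have h2 : ∑ i : Fin 2, dist (a i) (b i) ^ 2 = (a 0 - b 0)^2 + (a 1 - b 1)^2 := by
    rw [Fin.sum_univ_two, Real.dist_eq, Real.dist_eq, sq_abs, sq_abs]
  rw [h2]
  have h3 : (a 0 - b 0)^2 + (a 1 - b 1)^2 ≤ (|a 0 - b 0| + |a 1 - b 1|)^2 := by
    nlinarith [abs_nonneg (a 0 - b 0), abs_nonneg (a 1 - b 1), sq_abs (a 0 - b 0),
      sq_abs (a 1 - b 1)]
  calc Real.sqrt ((a 0 - b 0)^2 + (a 1 - b 1)^2)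
      ≤ Real.sqrt ((|a 0 - b 0| + |a 1 - b 1|)^2) := Real.sqrt_le_sqrt h3
    _ = |a 0 - b 0| + |a 1 - b 1| :=
        Real.sqrt_sq (by positivity)

lemma edge (m : ℕ) (hm : 1 ≤ m) {a b : E2} (ha : a ∈ unitCube 2) (hb : b ∈ unitCube 2)
    (hab : sle m a b) :
    dist a b ≤ 2 * ((strip m b : ℝ) - strip m a) + (b 0 - a 0)
      + (((strip m b : ℝ) - strip m a) + 1) / m := by
  have hm0 : (0:ℝ) < m := by exact_mod_cast hm
  have hsab : (strip m a : ℝ) ≤ strip m b := by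
    rcases hab with h | ⟨h, _⟩
    · exact_mod_cast h.le
    · exact_mod_cast h.le
  -- y bound
  have hy : |a 1 - b 1| ≤ (((strip m b : ℝ) - strip m a) + 1) / m := by
    rw [abs_sub_le_iff]
    constructor
    · calc a 1 - b 1 ≤ ((strip m a : ℝ) + 1) / m - (strip m b : ℝ) / m := by
            linarith [strip_ub m hm ha, strip_lb m hm hb]
        _ = (((strip m a : ℝ) - strip m b) + 1) / m := by ring
        _ ≤ (((strip m b : ℝ) - strip m a) + 1) / m :=
            (div_le_div_iff_of_pos_right hm0).mpr (by linarith)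
    · calc b 1 - a 1 ≤ ((strip m b : ℝ) + 1) / m - (strip m a : ℝ) / m := by
            linarith [strip_ub m hm hb, strip_lb m hm ha]
        _ = (((strip m b : ℝ) - strip m a) + 1) / m := by ring
  -- x bound
  have hx : |a 0 - b 0| ≤ 2 * ((strip m b : ℝ) - strip m a) + (b 0 - a 0) := by
    rcases hab with h | ⟨h, h'⟩
    · have h1 : (strip m a : ℝ) + 1 ≤ strip m b := by exact_mod_cast h
      have := (ha 0).1; have := (ha 0).2; have := (hb 0).1; have := (hb 0).2
      rw [abs_sub_le_iff]
      constructor <;> linarith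
    · have h1 : (strip m a : ℝ) = strip m b := by exact_mod_cast h
      rw [abs_of_nonpos (by linarith)]
      linarith
  calc dist a b ≤ |a 0 - b 0| + |a 1 - b 1| := dist_le_l1 a b
    _ ≤ _ := by linarith

end TSPaux

namespace TSPaux

lemma pathLen_dist_nonneg : ∀ l : List E2, 0 ≤ pathLen dist l
  | [] => le_refl 0
  | [_] => le_refl 0
  | a :: b :: t => by
    have := pathLen_dist_nonneg (b :: t)
    show 0 ≤ dist a b + pathLen dist (b :: t)
    have := dist_nonneg (x := a) (y := b)
    linarith

lemma chain_bound (m : ℕ) (hm : 1 ≤ m) :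
    ∀ (l : List E2) (a : E2), (∀ x ∈ a :: l, x ∈ unitCube 2) → List.Chain (sle m) a l →
      pathLen dist (a :: l) ≤
        2 * ((strip m (l.getLastD a) : ℝ) - strip m a) + ((l.getLastD a) 0 - a 0)
          + (((strip m (l.getLastD a) : ℝ) - strip m a) + l.length) / m
  | [], a, _, _ => by
    simp [pathLen]
  | b :: t, a, hcube, hchain => by
    rw [show List.Chain (sle m) a (b :: t) ↔ _ from List.isChain_cons_cons] at hchain
    have hcube' : ∀ x ∈ b :: t, x ∈ unitCube 2 := fun x hx =>
      hcube x (List.mem_cons_of_mem a hx)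
    have IH := chain_bound m hm t b hcube' hchain.2
    have hE := edge m hm (hcube a List.mem_cons_self) (hcube b (List.mem_cons_of_mem a List.mem_cons_self)) hchain.1
    have hgl : (b :: t).getLastD a = t.getLastD b := List.getLastD_cons
    rw [hgl]
    show dist a b + pathLen dist (b :: t) ≤ _
    have hlen : ((b :: t).length : ℝ) = (t.length : ℝ) + 1 := by push_cast [List.length_cons]; ring
    rw [hlen]
    have key : 2 * ((strip m (t.getLastD b) : ℝ) - strip m a) + ((t.getLastD b) 0 - a 0)
          + (((strip m (t.getLastD b) : ℝ) - strip m a) + ((t.length : ℝ) + 1)) / m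
        = (2 * ((strip m b : ℝ) - strip m a) + (b 0 - a 0)
            + (((strip m b : ℝ) - strip m a) + 1) / m)
          + (2 * ((strip m (t.getLastD b) : ℝ) - strip m b) + ((t.getLastD b) 0 - b 0)
            + (((strip m (t.getLastD b) : ℝ) - strip m b) + t.length) / m) := by
      field_simp
      ring
    rw [key]
    exact add_le_add hE IH

end TSPaux

/-- the shortest Hamiltonian path through any `n` points of the unit
square has length at most `c √n` for a universal constant `c`. -/
theorem tsp_le_sqrt_card :
    ∃ c : ℝ, 0 < c ∧ ∀ F : Finset (EuclideanSpace ℝ (Fin 2)),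
      (∀ x ∈ F, x ∈ unitCube 2) →
      tsp F (unitCube 2) ≤ c * Real.sqrt (F.card : ℝ) := by
  refine ⟨5, by norm_num, fun F hF => ?_⟩
  have hrestr : restr F (unitCube 2) = F := Finset.filter_true_of_mem hF
  rw [tsp, hrestr]
  set n := F.card with hn
  have hbdd : BddBelow {L : ℝ | ∃ l : List TSPaux.E2,
      l.Nodup ∧ @List.toFinset _ (fun a b => Classical.propDecidable (a = b)) l = F ∧ pathLen dist l = L} :=
    ⟨0, fun L ⟨l, _, _, hL⟩ => hL ▸ TSPaux.pathLen_dist_nonneg l⟩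
  rcases Nat.eq_zero_or_pos n with h0 | hpos
  · have hF0 : F = ∅ := Finset.card_eq_zero.mp h0
    have h1 : tspWith dist F ≤ 0 :=
      csInf_le hbdd ⟨[], List.nodup_nil, by simp [hF0], rfl⟩
    have h2 : (0:ℝ) ≤ 5 * Real.sqrt (n : ℝ) := by positivity
    exact h1.trans h2
  · set m := Nat.sqrt n + 1 with hm
    have hm1 : 1 ≤ m := Nat.le_add_left 1 _
    set leb : TSPaux.E2 → TSPaux.E2 → Bool := fun a b => decide (TSPaux.sle m a b) with hleb
    set l := F.toList.mergeSort leb with hl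
    have hperm : List.Perm l F.toList := List.mergeSort_perm _ _
    have hnodup : l.Nodup := hperm.nodup_iff.mpr F.nodup_toList
    have htofin : l.toFinset = F := by
      rw [List.toFinset_eq_of_perm _ _ hperm, Finset.toList_toFinset]
    have hsorted : l.Pairwise (TSPaux.sle m) := by
      have hp := List.pairwise_mergeSort (le := leb)
        (fun a b c h1 h2 => decide_eq_true
          (TSPaux.sle_trans m a b c (of_decide_eq_true h1) (of_decide_eq_true h2)))
        (fun a b => by
          rcases TSPaux.sle_total m a b with h | h
          · simp [hleb, h]
          · simp [hleb, h])
        F.toList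
      exact hp.imp (fun h => of_decide_eq_true h)
    have hmem : ∀ x ∈ l, x ∈ unitCube 2 := fun x hx =>
      hF x (htofin ▸ List.mem_toFinset.mpr hx)
    have hlen : l.length = n := by rw [hperm.length_eq, Finset.length_toList]
    have hle : tspWith dist F ≤ pathLen dist l :=
      csInf_le hbdd ⟨l, hnodup, by convert htofin, rfl⟩
    -- now bound pathLen dist l
    obtain ⟨a, t, hlat⟩ : ∃ a t, l = a :: t := by
      cases hl' : l with
      | nil => rw [hl'] at hlen; simp at hlen; omega
      | cons a t => exact ⟨a, t, rfl⟩
    rw [hlat] at hsorted hmem hlen hle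
    have hchain : List.Chain (TSPaux.sle m) a t := hsorted.isChain
    have hb := TSPaux.chain_bound m hm1 t a hmem hchain
    set L := t.getLastD a with hL
    have hLmem : L ∈ a :: t := List.getLastD_mem_cons
    have hLc : L ∈ unitCube 2 := hmem L hLmem
    have hac : a ∈ unitCube 2 := hmem a List.mem_cons_self
    have hm0 : (0:ℝ) < m := by exact_mod_cast hm1
    -- numeric facts
    have hcast : ((m - 1 : ℕ) : ℝ) = (m:ℝ) - 1 := by
      push_cast [Nat.cast_sub hm1]; ring
    have hsL : (TSPaux.strip m L : ℝ) ≤ (m:ℝ) - 1 := by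
      rw [← hcast]; exact_mod_cast TSPaux.strip_le m L
    have hsa : (0:ℝ) ≤ (TSPaux.strip m a : ℝ) := Nat.cast_nonneg _
    have htlen : (t.length : ℝ) = (n:ℝ) - 1 := by
      have : t.length + 1 = n := by simpa using hlen
      push_cast [← this]; ring
    set s := (Nat.sqrt n : ℝ) with hs
    have hms : (m:ℝ) = s + 1 := by rw [hm]; push_cast; ring
    have hsqn : (0:ℝ) ≤ Real.sqrt n := Real.sqrt_nonneg _
    have hs_le : s ≤ Real.sqrt n := by
      have h1 : s ^ 2 ≤ (n:ℝ) := by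
        rw [hs]
        have := Nat.sqrt_le' n
        exact_mod_cast this
      have h2 : s = Real.sqrt (s ^ 2) := (Real.sqrt_sq (Nat.cast_nonneg _)).symm
      rw [h2]
      exact Real.sqrt_le_sqrt h1
    have hsq_le_m : Real.sqrt n ≤ (m:ℝ) := by
      have h1 : (n:ℝ) ≤ (m:ℝ) * (m:ℝ) := by exact_mod_cast (Nat.lt_succ_sqrt n).le
      calc Real.sqrt n ≤ Real.sqrt ((m:ℝ) * (m:ℝ)) := Real.sqrt_le_sqrt h1
        _ = m := Real.sqrt_mul_self hm0.le
    have hone : (1:ℝ) ≤ Real.sqrt n := by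
      have : (1:ℝ) ≤ (n:ℝ) := by exact_mod_cast hpos
      calc (1:ℝ) = Real.sqrt 1 := Real.sqrt_one.symm
        _ ≤ Real.sqrt n := Real.sqrt_le_sqrt this
    have hnm : ((n:ℝ) - 1) / m ≤ Real.sqrt n := by
      rw [div_le_iff₀ hm0]
      have h2 : (n:ℝ) = Real.sqrt n * Real.sqrt n := (Real.mul_self_sqrt (Nat.cast_nonneg _)).symm
      nlinarith [hsq_le_m, hsqn]
    have hmm : ((m:ℝ) - 1) / m ≤ 1 := by
      rw [div_le_one hm0]; linarith
    -- combine
    have hx1 : L 0 - a 0 ≤ 1 := by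
      have := (hLc 0).2; have := (hac 0).1; linarith
    have hdiv : (((TSPaux.strip m L : ℝ) - TSPaux.strip m a) + (t.length : ℝ)) / m
        ≤ ((m:ℝ) - 1) / m + ((n:ℝ) - 1) / m := by
      rw [← add_div]
      exact (div_le_div_iff_of_pos_right hm0).mpr (by rw [htlen]; linarith)
    have hms' : (m:ℝ) - 1 = s := by rw [hms]; ring
    refine hle.trans ?_
    linarith [hb, hsL, hsa, hx1, hdiv, hmm, hnm, hs_le, hone, hms'.le, hms'.ge]
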